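/- Let h be a bounded continuous function on ℝ₊ × (-∞, L], let a : ℝ → ℝ be bounded, uniformly elliptic, and η-Hölder continuous, and let q̄^z_ε(y,z) = g(a(z)ε, z-y) - g(a(z)ε, z+y-2L). Then for every u ≥ 0 and y < L, lim_{ε→0} ∫_{-∞}^L h(u+ε, z) q̄^z_ε(y,z) dz = h(u, y). -/

import Mathlib

open MeasureTheory Real Filter

/-- Gaussian heat kernel `g(c,u) = (2πc)^{-1/2} exp(-u²/(2c))`. -/
noncomputable def gk (c u : ℝ) : ℝ :=
  (2 * Real.pi * c) ^ (-(1 : ℝ) / 2) * Real.exp (-u ^ 2 / (2 * c))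

lemma gk_eq {c : ℝ} (hc : 0 < c) (u : ℝ) :
    gk c u = (Real.sqrt (2 * π * c))⁻¹ * Real.exp (-u ^ 2 / (2 * c)) := by
  have h2 : (0:ℝ) < 2 * π * c := by positivity
  rw [gk, neg_div, Real.rpow_neg h2.le, ← Real.sqrt_eq_rpow]

lemma gk_nonneg {c : ℝ} (hc : 0 < c) (u : ℝ) : 0 ≤ gk c u := by
  rw [gk_eq hc]; positivity

noncomputable def bk (m M' w : ℝ) : ℝ := Real.sqrt (2 * M' / m) * gk (2 * M') w

lemma bk_eq {m M' : ℝ} (hm : 0 < m) (hM : 0 < M') (w : ℝ) :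
    bk m M' w = (Real.sqrt (2 * π * m))⁻¹ * Real.exp (-w ^ 2 / (4 * M')) := by
  have h4 : -w ^ 2 / (2 * (2 * M')) = -w ^ 2 / (4 * M') := by ring_nf
  have hq : 2 * M' / m = (2 * π * (2 * M')) / (2 * π * m) := by
    field_simp
  have hs : Real.sqrt (2 * π * (2 * M')) ≠ 0 := by positivity
  rw [bk, gk_eq (by positivity), h4, hq, Real.sqrt_div (by positivity) _]
  field_simp

lemma bk_nonneg {m M' : ℝ} (hM : 0 < M') (w : ℝ) : 0 ≤ bk m M' w :=
  mul_nonneg (Real.sqrt_nonneg _) (gk_nonneg (by positivity) w)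

lemma gk_le_bk {m M' c : ℝ} (hm : 0 < m) (h1 : m ≤ c) (h2 : c ≤ M') (w : ℝ) :
    gk c w ≤ bk m M' w := by
  have hc : 0 < c := hm.trans_le h1
  have hM : 0 < M' := hc.trans_le h2
  rw [gk_eq hc, bk_eq hm hM]
  have e1 : -w ^ 2 / (2 * c) ≤ -w ^ 2 / (4 * M') := by
    rw [div_le_div_iff₀ (by positivity) (by positivity)]
    nlinarith [sq_nonneg w]
  have i1 : (Real.sqrt (2 * π * c))⁻¹ ≤ (Real.sqrt (2 * π * m))⁻¹ := by
    gcongr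
  exact mul_le_mul i1 (Real.exp_le_exp.2 e1) (Real.exp_pos _).le (by positivity)

lemma gk_le_bk_tail {m M' c d w : ℝ} (hm : 0 < m) (h1 : m ≤ c) (h2 : c ≤ M')
    (hd : 0 ≤ d) (hw : d ≤ |w|) :
    gk c w ≤ Real.exp (-d ^ 2 / (4 * M')) * bk m M' w := by
  have hc : 0 < c := hm.trans_le h1
  have hM : 0 < M' := hc.trans_le h2
  have hw2 : d ^ 2 ≤ w ^ 2 := by
    calc d ^ 2 ≤ |w| ^ 2 := by gcongr
    _ = w ^ 2 := sq_abs w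
  rw [gk_eq hc, bk_eq hm hM,
    show Real.exp (-d ^ 2 / (4 * M')) * ((Real.sqrt (2 * π * m))⁻¹ *
        Real.exp (-w ^ 2 / (4 * M'))) =
      (Real.sqrt (2 * π * m))⁻¹ * Real.exp (-d ^ 2 / (4 * M') + -w ^ 2 / (4 * M')) by
      rw [Real.exp_add]; ring]
  have e1 : -w ^ 2 / (2 * c) ≤ -d ^ 2 / (4 * M') + -w ^ 2 / (4 * M') := by
    have hsum : -d ^ 2 / (4 * M') + -w ^ 2 / (4 * M') = (-d ^ 2 + -w ^ 2) / (4 * M') := by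
      ring
    rw [hsum, div_le_div_iff₀ (by positivity) (by positivity)]
    nlinarith [sq_nonneg w, mul_le_mul_of_nonneg_left hw2 hc.le,
      mul_le_mul_of_nonneg_left h2 (sq_nonneg w)]
  have i1 : (Real.sqrt (2 * π * c))⁻¹ ≤ (Real.sqrt (2 * π * m))⁻¹ := by
    gcongr
  exact mul_le_mul i1 (Real.exp_le_exp.2 e1) (Real.exp_pos _).le (by positivity)

lemma exp_neg_diff_le {s t : ℝ} (hs : 0 ≤ s) (ht : 0 ≤ t) :
    |Real.exp (-s) - Real.exp (-t)| ≤ |s - t| := by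
  have key : ∀ s t : ℝ, 0 ≤ s → 0 ≤ t → s ≤ t →
      Real.exp (-s) - Real.exp (-t) ≤ t - s := by
    intro s t hs ht hst
    have h1 : Real.exp (-s) - Real.exp (-t) = Real.exp (-s) * (1 - Real.exp (-(t - s))) := by
      rw [mul_sub, mul_one, ← Real.exp_add]; ring_nf
    have h2 : Real.exp (-s) ≤ 1 := Real.exp_le_one_iff.2 (by linarith)
    have h3 : (0:ℝ) ≤ 1 - Real.exp (-(t - s)) := by
      have := Real.exp_le_one_iff.2 (by linarith : -(t-s) ≤ 0); linarith
    have h4 : 1 - Real.exp (-(t - s)) ≤ t - s := by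
      have := Real.add_one_le_exp (-(t - s)); linarith
    calc Real.exp (-s) - Real.exp (-t) = Real.exp (-s) * (1 - Real.exp (-(t - s))) := h1
      _ ≤ 1 * (1 - Real.exp (-(t - s))) := by gcongr
      _ ≤ t - s := by linarith
  rcases le_total s t with hst | hst
  · rw [abs_of_nonneg (by have := Real.exp_le_exp.2 (neg_le_neg hst); linarith),
      abs_of_nonpos (by linarith)]
    simpa using key s t hs ht hst
  · rw [abs_of_nonpos (by have := Real.exp_le_exp.2 (neg_le_neg hst); linarith),
      abs_of_nonneg (by linarith)]
    have := key t s ht hs hst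
    linarith

lemma inv_sqrt_diff_le {m x x' : ℝ} (hm : 0 < m) (hx : m ≤ x) (hx' : m ≤ x') :
    |(Real.sqrt x)⁻¹ - (Real.sqrt x')⁻¹| ≤ |x - x'| / (2 * m * Real.sqrt m) := by
  have hx0 : 0 < x := hm.trans_le hx
  have hx'0 : 0 < x' := hm.trans_le hx'
  have hsx : 0 < Real.sqrt x := Real.sqrt_pos.2 hx0
  have hsx' : 0 < Real.sqrt x' := Real.sqrt_pos.2 hx'0
  have hsm : 0 < Real.sqrt m := Real.sqrt_pos.2 hm
  have key : |Real.sqrt x' - Real.sqrt x| * (Real.sqrt x' + Real.sqrt x) = |x' - x| := by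
    rw [← abs_of_pos (show (0:ℝ) < Real.sqrt x' + Real.sqrt x by positivity), ← abs_mul]
    congr 1
    have := Real.sq_sqrt hx0.le
    have := Real.sq_sqrt hx'0.le
    ring_nf
    nlinarith [Real.sq_sqrt hx0.le, Real.sq_sqrt hx'0.le]
  have e1 : (Real.sqrt x)⁻¹ - (Real.sqrt x')⁻¹ =
      (Real.sqrt x' - Real.sqrt x) / (Real.sqrt x * Real.sqrt x') := by
    field_simp
  rw [e1, abs_div, abs_of_pos (by positivity : (0:ℝ) < Real.sqrt x * Real.sqrt x')]
  have h2 : |Real.sqrt x' - Real.sqrt x| ≤ |x - x'| / (2 * Real.sqrt m) := by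
    rw [le_div_iff₀ (by positivity)]
    calc |Real.sqrt x' - Real.sqrt x| * (2 * Real.sqrt m)
        ≤ |Real.sqrt x' - Real.sqrt x| * (Real.sqrt x' + Real.sqrt x) := by
          gcongr
          linarith [Real.sqrt_le_sqrt hx, Real.sqrt_le_sqrt hx']
      _ = |x' - x| := key
      _ = |x - x'| := abs_sub_comm _ _
  have h3 : m ≤ Real.sqrt x * Real.sqrt x' := by
    calc m = Real.sqrt m * Real.sqrt m := (Real.mul_self_sqrt hm.le).symm
    _ ≤ Real.sqrt x * Real.sqrt x' := by
        gcongr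

  calc |Real.sqrt x' - Real.sqrt x| / (Real.sqrt x * Real.sqrt x')
      ≤ (|x - x'| / (2 * Real.sqrt m)) / m := by gcongr
    _ = |x - x'| / (2 * m * Real.sqrt m) := by rw [div_div]; congr 1; ring

lemma gk_diff_le {m c c' : ℝ} (hm : 0 < m) (hc : m ≤ c) (hc' : m ≤ c') (w : ℝ) :
    |gk c w - gk c' w| ≤
      |c - c'| * ((Real.sqrt (2 * π * m))⁻¹ * (1 / (2 * m) + w ^ 2 / (2 * m ^ 2))) := by
  have hc0 : 0 < c := hm.trans_le hc
  have hc'0 : 0 < c' := hm.trans_le hc'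
  have hπ := Real.pi_pos
  have hsm : 0 < Real.sqrt (2 * π * m) := Real.sqrt_pos.2 (by positivity)
  rw [gk_eq hc0, gk_eq hc'0]
  set A := (Real.sqrt (2 * π * c))⁻¹ with hA
  set A' := (Real.sqrt (2 * π * c'))⁻¹ with hA'
  set E := Real.exp (-w ^ 2 / (2 * c)) with hE
  set E' := Real.exp (-w ^ 2 / (2 * c')) with hE'
  have hE1 : E ≤ 1 := by
    rw [hE]
    refine Real.exp_le_one_iff.2 ?_
    have h0 : (0:ℝ) ≤ w ^ 2 / (2 * c) := by positivity
    rw [neg_div]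
    linarith
  have hE0 : (0:ℝ) ≤ E := (Real.exp_pos _).le
  have hA'0 : (0:ℝ) ≤ A' := by rw [hA']; positivity
  have hA'le : A' ≤ (Real.sqrt (2 * π * m))⁻¹ := by
    rw [hA']; gcongr
  have T1 : |A - A'| ≤ |c - c'| * ((Real.sqrt (2 * π * m))⁻¹ * (1 / (2 * m))) := by
    have h1 : |A - A'| ≤ |2 * π * c - 2 * π * c'| / (2 * (2 * π * m) * Real.sqrt (2 * π * m)) :=
      inv_sqrt_diff_le (by positivity) (by nlinarith) (by nlinarith)
    have h2 : |2 * π * c - 2 * π * c'| = 2 * π * |c - c'| := by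
      rw [show 2 * π * c - 2 * π * c' = (2 * π) * (c - c') by ring, abs_mul,
        abs_of_pos (by positivity : (0:ℝ) < 2 * π)]
    refine h1.trans (le_of_eq ?_)
    rw [h2]
    field_simp
  have T2 : A' * |E - E'| ≤ |c - c'| * ((Real.sqrt (2 * π * m))⁻¹ * (w ^ 2 / (2 * m ^ 2))) := by
    have h3 : |E - E'| ≤ |w ^ 2 / (2 * c) - w ^ 2 / (2 * c')| := by
      rw [hE, hE', neg_div, neg_div]
      exact exp_neg_diff_le (by positivity) (by positivity)
    have h4 : |w ^ 2 / (2 * c) - w ^ 2 / (2 * c')| ≤ w ^ 2 * |c - c'| / (2 * m ^ 2) := by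
      have he : w ^ 2 / (2 * c) - w ^ 2 / (2 * c') = w ^ 2 * (c' - c) / (2 * (c * c')) := by
        field_simp
      rw [he, abs_div, abs_mul, abs_of_nonneg (sq_nonneg w),
        abs_of_pos (show (0:ℝ) < 2 * (c * c') by positivity), abs_sub_comm]
      gcongr
      nlinarith [mul_le_mul hc hc' hm.le hc0.le]
    calc A' * |E - E'| ≤ (Real.sqrt (2 * π * m))⁻¹ * (w ^ 2 * |c - c'| / (2 * m ^ 2)) :=
          mul_le_mul hA'le (h3.trans h4) (abs_nonneg _) (by positivity)
      _ = |c - c'| * ((Real.sqrt (2 * π * m))⁻¹ * (w ^ 2 / (2 * m ^ 2))) := by ring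
  have split : A * E - A' * E' = (A - A') * E + A' * (E - E') := by ring
  calc |A * E - A' * E'| ≤ |(A - A') * E| + |A' * (E - E')| := by
        rw [split]; exact abs_add_le _ _
    _ = |A - A'| * E + A' * |E - E'| := by
        rw [abs_mul, abs_mul, abs_of_nonneg hE0, abs_of_nonneg hA'0]
    _ ≤ |A - A'| * 1 + A' * |E - E'| := by gcongr
    _ = |A - A'| + A' * |E - E'| := by ring
    _ ≤ |c - c'| * ((Real.sqrt (2 * π * m))⁻¹ * (1 / (2 * m)))
        + |c - c'| * ((Real.sqrt (2 * π * m))⁻¹ * (w ^ 2 / (2 * m ^ 2))) := add_le_add T1 T2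
    _ = |c - c'| * ((Real.sqrt (2 * π * m))⁻¹ * (1 / (2 * m) + w ^ 2 / (2 * m ^ 2))) := by ring

lemma abs_setIntegral_le {f g : ℝ → ℝ} {S : Set ℝ} (hS : MeasurableSet S)
    (hf : AEStronglyMeasurable f (volume.restrict S)) (hg : Integrable g)
    (hg0 : ∀ z, 0 ≤ g z) (hle : ∀ z ∈ S, |f z| ≤ g z) :
    |∫ z in S, f z| ≤ ∫ z, g z := by
  have hgS : IntegrableOn g S := hg.integrableOn
  have hfS : IntegrableOn f S :=
    Integrable.mono' hgS hf
      ((ae_restrict_iff' hS).2 (ae_of_all _ (by simpa [Real.norm_eq_abs] using hle)))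
  calc |∫ z in S, f z| ≤ ∫ z in S, |f z| := by
        simpa [Real.norm_eq_abs] using
          norm_integral_le_integral_norm (μ := volume.restrict S) f
    _ ≤ ∫ z in S, g z := setIntegral_mono_on hfS.abs hgS hS hle
    _ ≤ ∫ z, g z := setIntegral_le_integral hg (ae_of_all _ hg0)

lemma tendsto_exp_aux {q b : ℝ} (hq : 0 < q) (hb : 0 < b) :
    Tendsto (fun ε : ℝ => Real.exp (-q / (b * ε))) (nhdsWithin 0 (Set.Ioi 0)) (nhds 0) := by
  have h1 : Tendsto (fun ε : ℝ => (q / b) * ε⁻¹) (nhdsWithin 0 (Set.Ioi 0)) atTop :=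
    tendsto_inv_nhdsGT_zero.const_mul_atTop (by positivity)
  have h2 : Tendsto (fun ε : ℝ => -((q / b) * ε⁻¹)) (nhdsWithin 0 (Set.Ioi 0)) atBot :=
    tendsto_neg_atTop_atBot.comp h1
  have h3 := Real.tendsto_exp_atBot.comp h2
  refine h3.congr fun ε => ?_
  simp only [Function.comp]
  congr 1
  rw [neg_div, div_eq_mul_inv, div_eq_mul_inv, mul_inv, ← mul_assoc]

lemma tendsto_rpow_zero' {p : ℝ} (hp : 0 < p) :
    Tendsto (fun ε : ℝ => ε ^ p) (nhdsWithin 0 (Set.Ioi 0)) (nhds 0) := by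
  have h := (Real.continuousAt_rpow_const 0 p (Or.inr hp.le)).tendsto
  rw [Real.zero_rpow hp.ne'] at h
  exact h.mono_left nhdsWithin_le_nhds

lemma holder_continuous {K η : ℝ} (hη : 0 < η) {a : ℝ → ℝ}
    (hHolder : ∀ w w', |a w - a w'| ≤ K * |w - w'| ^ η) : Continuous a := by
  rw [continuous_iff_continuousAt]
  intro b
  rw [ContinuousAt, tendsto_iff_dist_tendsto_zero]
  refine squeeze_zero (fun w => dist_nonneg)
    (fun w => by simpa [Real.dist_eq] using hHolder w b) ?_
  have h1 : Tendsto (fun w : ℝ => |w - b|) (nhds b) (nhds 0) := by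
    have hcont : Continuous (fun w : ℝ => |w - b|) :=
      continuous_abs.comp (continuous_id.sub continuous_const)
    have := hcont.tendsto b
    simpa using this
  have h2 := (Real.continuousAt_rpow_const 0 η (Or.inr hη.le)).tendsto.comp h1
  rw [Real.zero_rpow hη.ne'] at h2
  have := h2.const_mul K
  simpa using this

lemma gk_shift_eq {c : ℝ} (hc : 0 < c) (s : ℝ) :
    (fun z => gk c (z - s)) = ProbabilityTheory.gaussianPDFReal s ⟨c, hc.le⟩ := by
  funext z
  rw [gk_eq hc]
  rfl

lemma integrable_gk_shift {c : ℝ} (hc : 0 < c) (s : ℝ) :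
    Integrable (fun z => gk c (z - s)) := by
  rw [gk_shift_eq hc s]
  exact ProbabilityTheory.integrable_gaussianPDFReal s _

lemma integral_gk_shift {c : ℝ} (hc : 0 < c) (s : ℝ) :
    ∫ z, gk c (z - s) = 1 := by
  rw [gk_shift_eq hc s]
  refine ProbabilityTheory.integral_gaussianPDFReal_eq_one s ?_
  refine fun h0 => hc.ne' ?_
  exact congrArg NNReal.toReal h0


lemma integrable_bk_shift {m M' : ℝ} (hM : 0 < M') (s : ℝ) :
    Integrable (fun z => bk m M' (z - s)) := by
  simp only [bk]
  exact (integrable_gk_shift (by positivity) s).const_mul _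

lemma integral_bk_shift {m M' : ℝ} (hM : 0 < M') (s : ℝ) :
    ∫ z, bk m M' (z - s) = Real.sqrt (2 * M' / m) := by
  simp only [bk]
  rw [integral_const_mul, integral_gk_shift (by positivity) s, mul_one]

lemma continuous_gk_comp {a : ℝ → ℝ} (hca : Continuous a) (hpos : ∀ z, 0 < a z)
    {ε : ℝ} (hε : 0 < ε) (s : ℝ) :
    Continuous (fun z => gk (a z * ε) (z - s)) := by
  simp only [gk]
  rw [continuous_iff_continuousAt]
  intro z₀
  have hden : ContinuousAt (fun z => 2 * π * (a z * ε)) z₀ :=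
    (continuous_const.mul (hca.mul continuous_const)).continuousAt
  have h1 : ContinuousAt (fun z => (2 * π * (a z * ε)) ^ (-(1:ℝ) / 2)) z₀ :=
    hden.rpow_const (Or.inl (by have := hpos z₀; positivity))
  have h2 : ContinuousAt (fun z => Real.exp (-(z - s) ^ 2 / (2 * (a z * ε)))) z₀ := by
    refine Real.continuous_exp.continuousAt.comp (ContinuousAt.div ?_ ?_ ?_)
    · exact (((continuous_id.sub continuous_const).pow 2).neg).continuousAt
    · exact (continuous_const.mul (hca.mul continuous_const)).continuousAt
    · have := hpos z₀; positivity
  exact h1.mul h2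

lemma integrableOn_mul_gk {a : ℝ → ℝ} {a₁ a₂ L : ℝ} (hca : Continuous a) (ha₁ : 0 < a₁)
    (he : ∀ z, a₁ ≤ a z ∧ a z ≤ a₂) {ε : ℝ} (hε : 0 < ε) {f : ℝ → ℝ} {Mf : ℝ}
    (hfm : AEStronglyMeasurable f (volume.restrict (Set.Iic L)))
    (hfb : ∀ z, |f z| ≤ Mf) (s : ℝ) :
    IntegrableOn (fun z => f z * gk (a z * ε) (z - s)) (Set.Iic L) := by
  have hMf : 0 ≤ Mf := (abs_nonneg _).trans (hfb 0)
  have hgm : AEStronglyMeasurable (fun z => gk (a z * ε) (z - s)) (volume.restrict (Set.Iic L)) :=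
    (continuous_gk_comp hca (fun z => ha₁.trans_le (he z).1) hε s).aestronglyMeasurable.restrict
  refine Integrable.mono'
    (((integrable_bk_shift (m := a₁ * ε) (M' := a₂ * ε)
      (mul_pos (ha₁.trans_le ((he 0).1.trans (he 0).2)) hε) s).const_mul Mf).integrableOn)
    (hfm.mul hgm) (ae_of_all _ fun z => ?_)
  have hpz : 0 < a z * ε := by have := ha₁.trans_le (he z).1; positivity
  have hg0 : 0 ≤ gk (a z * ε) (z - s) := gk_nonneg hpz _
  have hgle : gk (a z * ε) (z - s) ≤ bk (a₁ * ε) (a₂ * ε) (z - s) :=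
    gk_le_bk (by positivity) (by nlinarith [(he z).1]) (by nlinarith [(he z).2]) _
  have : ‖f z * gk (a z * ε) (z - s)‖ = |f z| * gk (a z * ε) (z - s) := by
    rw [Real.norm_eq_abs, abs_mul, abs_of_nonneg hg0]
  rw [this]
  exact mul_le_mul (hfb z) hgle hg0 hMf

lemma near_rpow_bound {a₁ η ε : ℝ} (ha₁ : 0 < a₁) (hη0 : 0 < η) (hε : 0 < ε) (hε1 : ε ≤ 1) :
    ε * (ε ^ (2 / (4 + η))) ^ η *
      ((Real.sqrt (2 * π * (a₁ * ε)))⁻¹ *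
        (1 / (2 * (a₁ * ε)) + (ε ^ (2 / (4 + η))) ^ 2 / (2 * (a₁ * ε) ^ 2))) *
      (2 * ε ^ (2 / (4 + η)))
    ≤ (Real.sqrt a₁)⁻¹ * (1 / a₁ + 1 / a₁ ^ 2) * ε ^ (η / (2 * (4 + η))) := by
  have h4η : (0:ℝ) < 4 + η := by linarith
  set β : ℝ := 2 / (4 + η) with hβ
  set p : ℝ := η / (2 * (4 + η)) with hp
  have hβ0 : 0 < β := by positivity
  have hp0 : 0 < p := by positivity
  have hδ0 : 0 < ε ^ β := Real.rpow_pos_of_pos hε β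
  have hsum0 : 0 ≤ 1 / (2 * (a₁ * ε)) + (ε ^ β) ^ 2 / (2 * (a₁ * ε) ^ 2) := by positivity
  -- replace the sqrt factor
  have hsq : (Real.sqrt (2 * π * (a₁ * ε)))⁻¹ ≤ (Real.sqrt a₁)⁻¹ * ε ^ (-(1/2) : ℝ) := by
    have h1 : (Real.sqrt (2 * π * (a₁ * ε)))⁻¹ ≤ (Real.sqrt (a₁ * ε))⁻¹ :=
      inv_anti₀ (Real.sqrt_pos.2 (by positivity))
        (Real.sqrt_le_sqrt (by nlinarith [Real.pi_gt_three, mul_pos ha₁ hε]))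
    have h2 : (Real.sqrt (a₁ * ε))⁻¹ = (Real.sqrt a₁)⁻¹ * ε ^ (-(1/2) : ℝ) := by
      rw [Real.sqrt_mul ha₁.le, mul_inv, Real.sqrt_eq_rpow ε, ← Real.rpow_neg hε.le]
    rw [← h2]; exact h1
  have step1 : ε * (ε ^ β) ^ η *
      ((Real.sqrt (2 * π * (a₁ * ε)))⁻¹ *
        (1 / (2 * (a₁ * ε)) + (ε ^ β) ^ 2 / (2 * (a₁ * ε) ^ 2))) * (2 * ε ^ β)
      ≤ ε * (ε ^ β) ^ η *
      (((Real.sqrt a₁)⁻¹ * ε ^ (-(1/2) : ℝ)) *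
        (1 / (2 * (a₁ * ε)) + (ε ^ β) ^ 2 / (2 * (a₁ * ε) ^ 2))) * (2 * ε ^ β) := by
    gcongr
  refine step1.trans ?_
  have hβη : (ε ^ β) ^ η = ε ^ (β * η) := (Real.rpow_mul hε.le β η).symm
  have hβ2 : (ε ^ β) ^ (2:ℕ) = ε ^ (β * 2) := by
    rw [← Real.rpow_natCast (ε ^ β) 2, ← Real.rpow_mul hε.le]
    norm_num
  have he1 : ε ^ (β * (1 + η) - 1/2) = ε * ε ^ (β * η) * ε ^ (-(1/2) : ℝ) * ε⁻¹ * ε ^ β := by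
    rw [show β * (1 + η) - 1/2 = 1 + β * η + (-(1/2)) + (-1) + β by ring]
    rw [Real.rpow_add hε, Real.rpow_add hε, Real.rpow_add hε, Real.rpow_add hε,
      Real.rpow_one, Real.rpow_neg_one]
  have he2 : ε ^ p = ε * ε ^ (β * η) * ε ^ (-(1/2) : ℝ) * ε ^ (β * 2) * ε⁻¹ * ε⁻¹ * ε ^ β := by
    rw [show p = 1 + β * η + (-(1/2)) + β * 2 + (-1) + (-1) + β by
      rw [hp, hβ]; field_simp; ring]
    rw [Real.rpow_add hε, Real.rpow_add hε, Real.rpow_add hε, Real.rpow_add hε,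
      Real.rpow_add hε, Real.rpow_add hε, Real.rpow_one, Real.rpow_neg_one]
  have hX : ε * (ε ^ β) ^ η *
      (((Real.sqrt a₁)⁻¹ * ε ^ (-(1/2) : ℝ)) *
        (1 / (2 * (a₁ * ε)) + (ε ^ β) ^ 2 / (2 * (a₁ * ε) ^ 2))) * (2 * ε ^ β)
      = (Real.sqrt a₁)⁻¹ * (1 / a₁) * ε ^ (β * (1 + η) - 1/2)
        + (Real.sqrt a₁)⁻¹ * (1 / a₁ ^ 2) * ε ^ p := by
    rw [hβη, hβ2, he1, he2]
    field_simp
  rw [hX]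
  have hple : p ≤ β * (1 + η) - 1/2 := by
    have hgap : β * (1 + η) - 1/2 - p = η / (4 + η) := by
      rw [hβ, hp]; field_simp; ring
    have : (0:ℝ) ≤ η / (4 + η) := by positivity
    linarith
  have hmono : ε ^ (β * (1 + η) - 1/2) ≤ ε ^ p :=
    Real.rpow_le_rpow_of_exponent_ge hε hε1 hple
  calc (Real.sqrt a₁)⁻¹ * (1 / a₁) * ε ^ (β * (1 + η) - 1/2)
      + (Real.sqrt a₁)⁻¹ * (1 / a₁ ^ 2) * ε ^ p
      ≤ (Real.sqrt a₁)⁻¹ * (1 / a₁) * ε ^ p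
      + (Real.sqrt a₁)⁻¹ * (1 / a₁ ^ 2) * ε ^ p := by gcongr
    _ = (Real.sqrt a₁)⁻¹ * (1 / a₁ + 1 / a₁ ^ 2) * ε ^ p := by ring

set_option maxHeartbeats 2000000 in
/-- Approximate identity property of the killed Gaussian kernel with diffusion
coefficient frozen at the terminal point: for `h` bounded and continuous on
`ℝ₊ × (-∞,L]`, `a` bounded, uniformly elliptic, `η`-Hölder, `u ≥ 0` and `y < L`,
`lim_{ε→0⁺} ∫_{-∞}^L h(u+ε, z) q̄^z_ε(y,z) dz = h(u,y)`. -/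
theorem killed_kernel_approximate_identity (L η K a₁ a₂ M u y : ℝ) (a : ℝ → ℝ)
    (h : ℝ → ℝ → ℝ)
    (hη : η ∈ Set.Ioc (0 : ℝ) 1) (ha₁ : 0 < a₁)
    (hell : ∀ w, a₁ ≤ a w ∧ a w ≤ a₂) (hK : 0 < K)
    (hHolder : ∀ w w', |a w - a w'| ≤ K * |w - w'| ^ η)
    (hbd : ∀ p q, |h p q| ≤ M)
    (hcont : ContinuousOn (fun p : ℝ × ℝ => h p.1 p.2) (Set.Ici 0 ×ˢ Set.Iic L))
    (hu : 0 ≤ u) (hy : y < L) :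
    Filter.Tendsto
      (fun ε => ∫ z in Set.Iic L,
        h (u + ε) z * (gk (a z * ε) (z - y) - gk (a z * ε) (z + y - 2 * L)))
      (nhdsWithin 0 (Set.Ioi 0)) (nhds (h u y)) := by
  obtain ⟨hη0, hη1⟩ := hη
  have ha₂ : 0 < a₂ := ha₁.trans_le ((hell 0).1.trans (hell 0).2)
  have hM0 : 0 ≤ M := (abs_nonneg _).trans (hbd 0 0)
  have hca : Continuous a := holder_continuous hη0 hHolder
  have hd : 0 < L - y := by linarith
  set l := nhdsWithin (0:ℝ) (Set.Ioi 0) with hl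
  set R : ℝ := Real.sqrt (2 * a₂ / a₁) with hR
  have hR0 : 0 ≤ R := Real.sqrt_nonneg _
  have hbkint : ∀ ε : ℝ, 0 < ε → ∀ s : ℝ, ∫ z, bk (a₁ * ε) (a₂ * ε) (z - s) = R := by
    intro ε hε s
    rw [integral_bk_shift (by positivity) s, hR]
    congr 1
    field_simp
  have hay : ∀ z : ℝ, 0 < a z := fun z => ha₁.trans_le (hell z).1
  -- slice measurability for h
  have hslice : ∀ t : ℝ, 0 ≤ t →
      AEStronglyMeasurable (fun z => h t z) (volume.restrict (Set.Iic L)) := by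
    intro t ht
    have hc2 : ContinuousOn (fun z => h t z) (Set.Iic L) := by
      have : ContinuousOn ((fun p : ℝ × ℝ => h p.1 p.2) ∘ (fun z => (t, z))) (Set.Iic L) :=
        hcont.comp (Continuous.continuousOn (by continuity)) (fun z hz => ⟨ht, hz⟩)
      exact this
    exact hc2.aestronglyMeasurable measurableSet_Iic
  -- the four pieces
  set A : ℝ → ℝ := fun ε => ∫ z in Set.Iic L, h (u + ε) z * gk (a z * ε) (z - y) with hA
  set B : ℝ → ℝ := fun ε => ∫ z in Set.Iic L, h (u + ε) z * gk (a z * ε) (z + y - 2 * L) with hB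
  set C : ℝ → ℝ := fun ε => ∫ z in Set.Iic L, h (u + ε) z * gk (a y * ε) (z - y) with hC
  set Dq : ℝ → ℝ := fun ε => ∫ z in Set.Iic L, gk (a y * ε) (z - y) with hDq
  have hIA : ∀ ε : ℝ, 0 < ε →
      IntegrableOn (fun z => h (u + ε) z * gk (a z * ε) (z - y)) (Set.Iic L) := by
    intro ε hε
    exact integrableOn_mul_gk hca ha₁ hell hε (hslice (u + ε) (by linarith))
      (fun z => hbd (u + ε) z) y
  have hIB : ∀ ε : ℝ, 0 < ε →
      IntegrableOn (fun z => h (u + ε) z * gk (a z * ε) (z + y - 2 * L)) (Set.Iic L) := by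
    intro ε hε
    have := integrableOn_mul_gk hca ha₁ hell hε (hslice (u + ε) (by linarith))
      (fun z => hbd (u + ε) z) (2 * L - y)
    simpa [show ∀ z : ℝ, z - (2 * L - y) = z + y - 2 * L from fun z => by ring] using this
  have hIC : ∀ ε : ℝ, 0 < ε →
      IntegrableOn (fun z => h (u + ε) z * gk (a y * ε) (z - y)) (Set.Iic L) := by
    intro ε hε
    exact integrableOn_mul_gk (a := fun _ => a y) continuous_const ha₁
      (fun _ => hell y) hε (hslice (u + ε) (by linarith)) (fun z => hbd (u + ε) z) y
  have hID : ∀ ε : ℝ, 0 < ε →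
      IntegrableOn (fun z => gk (a y * ε) (z - y)) (Set.Iic L) := by
    intro ε hε
    exact (integrable_gk_shift (by have := hay y; positivity) y).integrableOn
  have hform : ∀ z : ℝ, z + y - 2 * L = z - (2 * L - y) := fun z => by ring
  have hev1 : ∀ᶠ ε in l, ε ≤ 1 := by
    refine Filter.eventually_of_mem (mem_nhdsWithin_of_mem_nhds (Iic_mem_nhds one_pos)) ?_
    exact fun ε hε => hε
  have hexp0 : ∀ q : ℝ, 0 < q →
      Tendsto (fun ε : ℝ => Real.exp (-q / (4 * (a₂ * ε)))) l (nhds 0) := by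
    intro q hq
    have h0 : Tendsto (fun ε : ℝ => Real.exp (-q / ((4 * a₂) * ε))) l (nhds 0) :=
      tendsto_exp_aux hq (by positivity)
    refine h0.congr fun ε => ?_
    rw [mul_assoc]
  have c1 : Tendsto B l (nhds 0) := by
    have hbound : ∀ᶠ ε in l, |B ε| ≤ M * Real.exp (-(L - y) ^ 2 / (4 * (a₂ * ε))) * R := by
      filter_upwards [eventually_mem_nhdsWithin] with ε (hε : ε ∈ Set.Ioi 0)
      have hε0 : (0:ℝ) < ε := hε
      have hm : 0 < a₁ * ε := by positivity
      set e := Real.exp (-(L - y) ^ 2 / (4 * (a₂ * ε))) with he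
      have he0 : 0 ≤ e := (Real.exp_pos _).le
      have hBeq : B ε = ∫ z in Set.Iic L, h (u + ε) z * gk (a z * ε) (z - (2 * L - y)) := by
        rw [hB]; simp only [hform]
      rw [hBeq]
      have hb := abs_setIntegral_le (f := fun z => h (u + ε) z * gk (a z * ε) (z - (2 * L - y)))
        (g := fun z => M * e * bk (a₁ * ε) (a₂ * ε) (z - (2 * L - y)))
        measurableSet_Iic
        ((hslice (u + ε) (by linarith)).mul
          ((continuous_gk_comp hca hay hε0 (2 * L - y)).aestronglyMeasurable.restrict))
        (((integrable_bk_shift (m := a₁ * ε) (by positivity) (2 * L - y)).const_mul (M * e)))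
        (fun z => mul_nonneg (mul_nonneg hM0 he0) (bk_nonneg (by positivity) _))
        ?_
      · refine hb.trans_eq ?_
        rw [integral_const_mul, hbkint ε hε0]
      · intro z hz
        have hz' : z ≤ L := hz
        have hc : 0 < a z * ε := by have := hay z; positivity
        have habs : L - y ≤ |z - (2 * L - y)| := by
          rw [abs_of_nonpos (by linarith)]; linarith
        have htail : gk (a z * ε) (z - (2 * L - y)) ≤ e * bk (a₁ * ε) (a₂ * ε) (z - (2 * L - y)) :=
          gk_le_bk_tail hm (by nlinarith [(hell z).1]) (by nlinarith [(hell z).2]) hd.le habs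
        rw [abs_mul, abs_of_nonneg (gk_nonneg hc _)]
        calc |h (u + ε) z| * gk (a z * ε) (z - (2 * L - y))
            ≤ M * (e * bk (a₁ * ε) (a₂ * ε) (z - (2 * L - y))) :=
              mul_le_mul (hbd _ _) htail (gk_nonneg hc _) hM0
          _ = M * e * bk (a₁ * ε) (a₂ * ε) (z - (2 * L - y)) := by ring
    have hexp : Tendsto (fun ε : ℝ => M * Real.exp (-(L - y) ^ 2 / (4 * (a₂ * ε))) * R) l
        (nhds 0) := by
      simpa using ((hexp0 ((L - y) ^ 2) (by positivity)).const_mul M).mul_const R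
    rw [tendsto_zero_iff_abs_tendsto_zero]
    exact squeeze_zero' (Eventually.of_forall fun ε => abs_nonneg _) hbound hexp
  have c4 : Tendsto Dq l (nhds 1) := by
    have hbound : ∀ᶠ ε in l, |Dq ε - 1| ≤ Real.exp (-(L - y) ^ 2 / (4 * (a₂ * ε))) * R := by
      filter_upwards [eventually_mem_nhdsWithin] with ε (hε : ε ∈ Set.Ioi 0)
      have hε0 : (0:ℝ) < ε := hε
      have hcy : 0 < a y * ε := by have := hay y; positivity
      set e := Real.exp (-(L - y) ^ 2 / (4 * (a₂ * ε))) with he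
      have he0 : 0 ≤ e := (Real.exp_pos _).le
      have hsplit : Dq ε + ∫ z in Set.Ioi L, gk (a y * ε) (z - y) = 1 := by
        have h1 := integral_add_compl (s := Set.Iic L) measurableSet_Iic
          (integrable_gk_shift hcy y)
        rw [Set.compl_Iic] at h1
        rw [hDq]
        exact h1.trans (integral_gk_shift hcy y)
      have hDq1 : Dq ε - 1 = -∫ z in Set.Ioi L, gk (a y * ε) (z - y) := by linarith
      rw [hDq1, abs_neg]
      have hb := abs_setIntegral_le (f := fun z => gk (a y * ε) (z - y))
        (g := fun z => e * bk (a₁ * ε) (a₂ * ε) (z - y))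
        (measurableSet_Ioi (a := L))
        ((continuous_gk_comp (a := fun _ => a y) continuous_const (fun _ => hay y) hε0
          y).aestronglyMeasurable.restrict)
        ((integrable_bk_shift (m := a₁ * ε) (by positivity) y).const_mul e)
        (fun z => mul_nonneg he0 (bk_nonneg (by positivity) _))
        ?_
      · refine hb.trans_eq ?_
        rw [integral_const_mul, hbkint ε hε0]
      · intro z hz
        have hz' : L < z := hz
        have habs : L - y ≤ |z - y| := by
          rw [abs_of_pos (by linarith)]; linarith
        rw [abs_of_nonneg (gk_nonneg hcy _)]
        exact gk_le_bk_tail (by positivity) (by nlinarith [(hell y).1])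
          (by nlinarith [(hell y).2]) hd.le habs
    have hexp : Tendsto (fun ε : ℝ => Real.exp (-(L - y) ^ 2 / (4 * (a₂ * ε))) * R) l
        (nhds 0) := by
      simpa using (hexp0 ((L - y) ^ 2) (by positivity)).mul_const R
    have hsub : Tendsto (fun ε => Dq ε - 1) l (nhds 0) := by
      rw [tendsto_zero_iff_abs_tendsto_zero]
      exact squeeze_zero' (Eventually.of_forall fun ε => abs_nonneg _) hbound hexp
    have := hsub.add_const 1
    simpa using this
  have c2 : Tendsto (fun ε => A ε - C ε) l (nhds 0) := by
    have h4η : (0:ℝ) < 4 + η := by linarith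
    have hp0 : (0:ℝ) < η / (2 * (4 + η)) := by positivity
    have hbound : ∀ᶠ ε in l, |A ε - C ε| ≤
        M * K * ((Real.sqrt a₁)⁻¹ * (1 / a₁ + 1 / a₁ ^ 2) * ε ^ (η / (2 * (4 + η))))
        + 2 * M * Real.exp (-(ε ^ (2 / (4 + η))) ^ 2 / (4 * (a₂ * ε))) * R := by
      filter_upwards [eventually_mem_nhdsWithin, hev1] with ε (hε : ε ∈ Set.Ioi 0) hε1
      have hε0 : (0:ℝ) < ε := hε
      have hm : 0 < a₁ * ε := by positivity
      set δ : ℝ := ε ^ (2 / (4 + η)) with hδ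
      have hδ0 : 0 < δ := Real.rpow_pos_of_pos hε0 _
      set e := Real.exp (-δ ^ 2 / (4 * (a₂ * ε))) with he
      have he0 : 0 ≤ e := (Real.exp_pos _).le
      set ψ : ℝ → ℝ := fun z =>
        h (u + ε) z * (gk (a z * ε) (z - y) - gk (a y * ε) (z - y)) with hψ
      have hψeq : (fun z => h (u + ε) z * gk (a z * ε) (z - y)
          - h (u + ε) z * gk (a y * ε) (z - y)) = ψ := by
        funext z; rw [hψ]; ring
      have hψint : IntegrableOn ψ (Set.Iic L) := by
        rw [← hψeq]; exact (hIA ε hε0).sub (hIC ε hε0)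
      have hAC : A ε - C ε = ∫ z in Set.Iic L, ψ z := by
        rw [hA, hC, ← integral_sub (hIA ε hε0) (hIC ε hε0), ← hψeq]
      have hψm : AEStronglyMeasurable ψ (volume.restrict (Set.Iic L)) :=
        hψint.aestronglyMeasurable
      have hsplit := integral_inter_add_diff (s := Set.Iic L) (t := Set.Icc (y - δ) (y + δ))
        measurableSet_Icc hψint
      set Cb : ℝ := M * (K * ε * δ ^ η) * ((Real.sqrt (2 * π * (a₁ * ε)))⁻¹ *
        (1 / (2 * (a₁ * ε)) + δ ^ 2 / (2 * (a₁ * ε) ^ 2))) with hCb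
      have hCb0 : 0 ≤ Cb := by
        rw [hCb]
        have h1 : (0:ℝ) ≤ K * ε * δ ^ η := by positivity
        have h2 : (0:ℝ) ≤ (Real.sqrt (2 * π * (a₁ * ε)))⁻¹ *
            (1 / (2 * (a₁ * ε)) + δ ^ 2 / (2 * (a₁ * ε) ^ 2)) := by positivity
        exact mul_nonneg (mul_nonneg hM0 h1) h2
      have hb1 : |∫ z in Set.Iic L ∩ Set.Icc (y - δ) (y + δ), ψ z| ≤ Cb * (2 * δ) := by
        have hfin : volume (Set.Iic L ∩ Set.Icc (y - δ) (y + δ)) < ⊤ :=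
          lt_of_le_of_lt (measure_mono Set.inter_subset_right)
            (by rw [Real.volume_Icc]; exact ENNReal.ofReal_lt_top)
        have hnb : ∀ z ∈ Set.Iic L ∩ Set.Icc (y - δ) (y + δ), ‖ψ z‖ ≤ Cb := by
          intro z hz
          obtain ⟨hzL, hzI⟩ := hz
          have hzy : |z - y| ≤ δ := by
            rw [abs_le]; constructor <;> [linarith [hzI.1]; linarith [hzI.2]]
          have hdiff : |gk (a z * ε) (z - y) - gk (a y * ε) (z - y)| ≤
              (K * ε * δ ^ η) * ((Real.sqrt (2 * π * (a₁ * ε)))⁻¹ *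
                (1 / (2 * (a₁ * ε)) + δ ^ 2 / (2 * (a₁ * ε) ^ 2))) := by
            have hd1 := gk_diff_le (m := a₁ * ε) (c := a z * ε) (c' := a y * ε) hm
              (by nlinarith [(hell z).1]) (by nlinarith [(hell y).1]) (z - y)
            have hd2 : |a z * ε - a y * ε| ≤ K * ε * δ ^ η := by
              rw [show a z * ε - a y * ε = (a z - a y) * ε by ring, abs_mul,
                abs_of_pos hε0]
              have h5 := hHolder z y
              have h3 : |z - y| ^ η ≤ δ ^ η :=
                Real.rpow_le_rpow (abs_nonneg _) hzy hη0.le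
              have h6 : |a z - a y| ≤ K * δ ^ η :=
                h5.trans (mul_le_mul_of_nonneg_left h3 hK.le)
              calc |a z - a y| * ε ≤ (K * δ ^ η) * ε :=
                    mul_le_mul_of_nonneg_right h6 hε0.le
                _ = K * ε * δ ^ η := by ring
            have hw2 : (z - y) ^ 2 ≤ δ ^ 2 := by
              rw [← sq_abs (z - y)]
              gcongr
            refine hd1.trans ?_
            gcongr
          rw [hψ, Real.norm_eq_abs, abs_mul]
          calc |h (u + ε) z| * |gk (a z * ε) (z - y) - gk (a y * ε) (z - y)|
              ≤ M * ((K * ε * δ ^ η) * ((Real.sqrt (2 * π * (a₁ * ε)))⁻¹ *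
                (1 / (2 * (a₁ * ε)) + δ ^ 2 / (2 * (a₁ * ε) ^ 2)))) :=
                mul_le_mul (hbd _ _) hdiff (abs_nonneg _) hM0
            _ = Cb := by rw [hCb]; ring
        have hn := norm_setIntegral_le_of_norm_le_const hfin hnb
        have hvol : (volume (Set.Iic L ∩ Set.Icc (y - δ) (y + δ))).toReal ≤ 2 * δ := by
          refine ENNReal.toReal_le_of_le_ofReal (by positivity) ?_
          refine (measure_mono Set.inter_subset_right).trans ?_
          rw [Real.volume_Icc]
          exact ENNReal.ofReal_le_ofReal (by linarith)
        rw [Real.norm_eq_abs] at hn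
        calc |∫ z in Set.Iic L ∩ Set.Icc (y - δ) (y + δ), ψ z|
            ≤ Cb * (volume (Set.Iic L ∩ Set.Icc (y - δ) (y + δ))).toReal := hn
          _ ≤ Cb * (2 * δ) := mul_le_mul_of_nonneg_left hvol hCb0
      have hb1' : |∫ z in Set.Iic L ∩ Set.Icc (y - δ) (y + δ), ψ z| ≤
          M * K * ((Real.sqrt a₁)⁻¹ * (1 / a₁ + 1 / a₁ ^ 2) * ε ^ (η / (2 * (4 + η)))) := by
        refine hb1.trans ?_
        have hnr := near_rpow_bound ha₁ hη0 hε0 hε1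
        rw [← hδ] at hnr
        calc Cb * (2 * δ) = M * K *
            (ε * δ ^ η * ((Real.sqrt (2 * π * (a₁ * ε)))⁻¹ *
              (1 / (2 * (a₁ * ε)) + δ ^ 2 / (2 * (a₁ * ε) ^ 2))) * (2 * δ)) := by
              rw [hCb]; ring
          _ ≤ M * K * ((Real.sqrt a₁)⁻¹ * (1 / a₁ + 1 / a₁ ^ 2) * ε ^ (η / (2 * (4 + η)))) :=
              mul_le_mul_of_nonneg_left hnr (mul_nonneg hM0 hK.le)
      have hb2 : |∫ z in Set.Iic L \ Set.Icc (y - δ) (y + δ), ψ z| ≤ 2 * M * e * R := by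
        have hb := abs_setIntegral_le (f := ψ)
          (g := fun z => 2 * M * e * bk (a₁ * ε) (a₂ * ε) (z - y))
          (S := Set.Iic L \ Set.Icc (y - δ) (y + δ))
          (measurableSet_Iic.diff measurableSet_Icc)
          (hψm.mono_measure (Measure.restrict_mono Set.diff_subset le_rfl))
          ((integrable_bk_shift (m := a₁ * ε) (by positivity) y).const_mul (2 * M * e))
          (fun z => mul_nonneg (by positivity) (bk_nonneg (by positivity) _))
          ?_
        · refine hb.trans_eq ?_
          rw [integral_const_mul, hbkint ε hε0]
        · intro z hz
          obtain ⟨hzL, hzI⟩ := hz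
          have hzy : δ ≤ |z - y| := by
            rw [Set.mem_Icc] at hzI
            push_neg at hzI
            rcases le_or_gt (y - δ) z with h' | h'
            · have := hzI h'
              rw [abs_of_pos (by linarith)]; linarith
            · rw [abs_of_neg (by linarith)]; linarith
          have hcz : 0 < a z * ε := by have := hay z; positivity
          have hcy : 0 < a y * ε := by have := hay y; positivity
          have ht1 : gk (a z * ε) (z - y) ≤ e * bk (a₁ * ε) (a₂ * ε) (z - y) :=
            gk_le_bk_tail hm (by nlinarith [(hell z).1]) (by nlinarith [(hell z).2])
              hδ0.le hzy
          have ht2 : gk (a y * ε) (z - y) ≤ e * bk (a₁ * ε) (a₂ * ε) (z - y) :=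
            gk_le_bk_tail hm (by nlinarith [(hell y).1]) (by nlinarith [(hell y).2])
              hδ0.le hzy
          have hgdiff : |gk (a z * ε) (z - y) - gk (a y * ε) (z - y)| ≤
              2 * (e * bk (a₁ * ε) (a₂ * ε) (z - y)) := by
            have := abs_sub (gk (a z * ε) (z - y)) (gk (a y * ε) (z - y))
            rw [abs_of_nonneg (gk_nonneg hcz _), abs_of_nonneg (gk_nonneg hcy _)] at this
            linarith
          rw [hψ, abs_mul]
          calc |h (u + ε) z| * |gk (a z * ε) (z - y) - gk (a y * ε) (z - y)|
              ≤ M * (2 * (e * bk (a₁ * ε) (a₂ * ε) (z - y))) :=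
                mul_le_mul (hbd _ _) hgdiff (abs_nonneg _) hM0
            _ = 2 * M * e * bk (a₁ * ε) (a₂ * ε) (z - y) := by ring
      calc |A ε - C ε|
          = |(∫ z in Set.Iic L ∩ Set.Icc (y - δ) (y + δ), ψ z)
            + ∫ z in Set.Iic L \ Set.Icc (y - δ) (y + δ), ψ z| := by rw [hAC, hsplit]
        _ ≤ |∫ z in Set.Iic L ∩ Set.Icc (y - δ) (y + δ), ψ z|
            + |∫ z in Set.Iic L \ Set.Icc (y - δ) (y + δ), ψ z| := abs_add_le _ _
        _ ≤ M * K * ((Real.sqrt a₁)⁻¹ * (1 / a₁ + 1 / a₁ ^ 2) * ε ^ (η / (2 * (4 + η))))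
            + 2 * M * e * R := add_le_add hb1' hb2
    have hT1 : Tendsto (fun ε : ℝ =>
        M * K * ((Real.sqrt a₁)⁻¹ * (1 / a₁ + 1 / a₁ ^ 2) * ε ^ (η / (2 * (4 + η))))) l
        (nhds 0) := by
      have h0 := (tendsto_rpow_zero' hp0).const_mul
        (M * K * ((Real.sqrt a₁)⁻¹ * (1 / a₁ + 1 / a₁ ^ 2)))
      rw [mul_zero] at h0
      exact h0.congr fun ε => by ring
    have hT2 : Tendsto (fun ε : ℝ =>
        2 * M * Real.exp (-(ε ^ (2 / (4 + η))) ^ 2 / (4 * (a₂ * ε))) * R) l (nhds 0) := by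
      have hγ0 : (0:ℝ) < η / (4 + η) := by positivity
      have hgt : Tendsto (fun ε : ℝ => ε ^ (η / (4 + η))) l (nhdsWithin 0 (Set.Ioi 0)) :=
        tendsto_nhdsWithin_of_tendsto_nhds_of_eventually_within _ (tendsto_rpow_zero' hγ0)
          (Filter.eventually_of_mem self_mem_nhdsWithin fun ε (hε : ε ∈ Set.Ioi 0) =>
            Set.mem_Ioi.2 (Real.rpow_pos_of_pos hε _))
      have h2 : Tendsto (fun ε : ℝ => 1 / (4 * a₂) * (ε ^ (η / (4 + η)))⁻¹) l atTop :=
        (tendsto_inv_nhdsGT_zero.comp hgt).const_mul_atTop (by positivity)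
      have h3 : Tendsto (fun ε : ℝ => Real.exp (-(1 / (4 * a₂) * (ε ^ (η / (4 + η)))⁻¹))) l
          (nhds 0) := Real.tendsto_exp_atBot.comp (tendsto_neg_atTop_atBot.comp h2)
      have heqv : (fun ε : ℝ => 2 * M * Real.exp (-(1 / (4 * a₂) * (ε ^ (η / (4 + η)))⁻¹)) * R)
          =ᶠ[l] fun ε : ℝ => 2 * M * Real.exp (-(ε ^ (2 / (4 + η))) ^ 2 / (4 * (a₂ * ε))) * R := by
        filter_upwards [eventually_mem_nhdsWithin] with ε (hε : ε ∈ Set.Ioi 0)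
        have hε0 : (0:ℝ) < ε := hε
        have hexp : (ε ^ (2 / (4 + η))) ^ 2 / (4 * (a₂ * ε))
            = 1 / (4 * a₂) * (ε ^ (η / (4 + η)))⁻¹ := by
          have h1 : (ε ^ (2 / (4 + η))) ^ (2:ℕ) = ε ^ (2 / (4 + η) * 2) := by
            rw [← Real.rpow_natCast (ε ^ (2 / (4 + η))) 2, ← Real.rpow_mul hε0.le]
            norm_num
          have hninv : (ε ^ (η / (4 + η)))⁻¹ = ε ^ (-(η / (4 + η))) :=
            (Real.rpow_neg hε0.le _).symm
          rw [h1, hninv, show 2 / (4 + η) * 2 = -(η / (4 + η)) + 1 by field_simp; ring,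
            Real.rpow_add hε0, Real.rpow_one]
          field_simp
        rw [neg_div, hexp]
      exact Tendsto.congr' heqv (by simpa using (h3.const_mul (2 * M)).mul_const R)
    rw [tendsto_zero_iff_abs_tendsto_zero]
    refine squeeze_zero' (Eventually.of_forall fun ε => abs_nonneg _) hbound ?_
    simpa using hT1.add hT2
  have c3 : Tendsto (fun ε => C ε - h u y * Dq ε) l (nhds 0) := by
    rw [NormedAddCommGroup.tendsto_nhds_zero]
    intro θ hθ
    have hmem : (u, y) ∈ Set.Ici (0:ℝ) ×ˢ Set.Iic L := ⟨hu, hy.le⟩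
    have hcw := hcont (u, y) hmem
    rw [Metric.continuousWithinAt_iff] at hcw
    have hθ'0 : 0 < θ / (2 * (R + 1)) := by positivity
    obtain ⟨δc, hδc0, hδc⟩ := hcw (θ / (2 * (R + 1))) hθ'0
    set θ' := θ / (2 * (R + 1)) with hθ'
    set δ₀ := δc / 2 with hδ₀
    have hδ₀0 : 0 < δ₀ := by positivity
    have hevδ : ∀ᶠ ε in l, ε < δ₀ := by
      refine Filter.eventually_of_mem (mem_nhdsWithin_of_mem_nhds (Iio_mem_nhds hδ₀0)) ?_
      exact fun ε hε => hε
    have hbound : ∀ᶠ ε in l, |C ε - h u y * Dq ε| ≤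
        θ' * R + 2 * M * Real.exp (-δ₀ ^ 2 / (4 * (a₂ * ε))) * R := by
      filter_upwards [eventually_mem_nhdsWithin, hevδ] with ε (hε : ε ∈ Set.Ioi 0) hεδ
      have hε0 : (0:ℝ) < ε := hε
      have hcy : 0 < a y * ε := by have := hay y; positivity
      have hm : 0 < a₁ * ε := by positivity
      set e := Real.exp (-δ₀ ^ 2 / (4 * (a₂ * ε))) with he
      have he0 : 0 ≤ e := (Real.exp_pos _).le
      set φ : ℝ → ℝ := fun z => (h (u + ε) z - h u y) * gk (a y * ε) (z - y) with hφ
      have hφeq : (fun z => h (u + ε) z * gk (a y * ε) (z - y)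
          - h u y * gk (a y * ε) (z - y)) = φ := by
        funext z; rw [hφ]; ring
      have hφint : IntegrableOn φ (Set.Iic L) := by
        rw [← hφeq]
        exact (hIC ε hε0).sub ((hID ε hε0).const_mul (h u y))
      have hCD : C ε - h u y * Dq ε = ∫ z in Set.Iic L, φ z := by
        rw [hC, hDq, ← integral_const_mul, ← integral_sub (hIC ε hε0)
          ((hID ε hε0).const_mul (h u y))]
        rw [← hφeq]
      have hsplit := integral_inter_add_diff (s := Set.Iic L)
        (t := Set.Icc (y - δ₀) (y + δ₀)) measurableSet_Icc hφint
      have hφm : AEStronglyMeasurable φ (volume.restrict (Set.Iic L)) :=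
        hφint.aestronglyMeasurable
      have hb1 : |∫ z in Set.Iic L ∩ Set.Icc (y - δ₀) (y + δ₀), φ z| ≤ θ' * R := by
        have hb := abs_setIntegral_le (f := φ)
          (g := fun z => θ' * bk (a₁ * ε) (a₂ * ε) (z - y))
          (S := Set.Iic L ∩ Set.Icc (y - δ₀) (y + δ₀))
          (measurableSet_Iic.inter measurableSet_Icc)
          (hφm.mono_measure (Measure.restrict_mono Set.inter_subset_left le_rfl))
          ((integrable_bk_shift (m := a₁ * ε) (by positivity) y).const_mul θ')
          (fun z => mul_nonneg hθ'0.le (bk_nonneg (by positivity) _))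
          ?_
        · refine hb.trans_eq ?_
          rw [integral_const_mul, hbkint ε hε0]
        · intro z hz
          obtain ⟨hzL, hzI⟩ := hz
          have hzy : |z - y| ≤ δ₀ := by
            rw [abs_le]; constructor <;> [linarith [hzI.1]; linarith [hzI.2]]
          have hdist : dist ((u + ε, z) : ℝ × ℝ) (u, y) < δc := by
            rw [Prod.dist_eq]
            have h1 : dist (u + ε) u = ε := by
              rw [Real.dist_eq]; rw [abs_of_pos (by linarith)]; ring_nf
            have h2 : dist z y = |z - y| := Real.dist_eq z y
            rw [h1, h2]
            simp only [max_lt_iff]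
            constructor <;> [linarith; linarith]
          have hdom : ((u + ε, z) : ℝ × ℝ) ∈ Set.Ici (0:ℝ) ×ˢ Set.Iic L :=
            ⟨by simp; linarith, hzL⟩
          have hhd : |h (u + ε) z - h u y| < θ' := by
            have := hδc hdom hdist
            rw [Real.dist_eq] at this
            exact this
          rw [hφ, abs_mul, abs_of_nonneg (gk_nonneg hcy _)]
          exact mul_le_mul hhd.le
            (gk_le_bk (by positivity) (by nlinarith [(hell y).1]) (by nlinarith [(hell y).2]) _)
            (gk_nonneg hcy _) hθ'0.le
      have hb2 : |∫ z in Set.Iic L \ Set.Icc (y - δ₀) (y + δ₀), φ z| ≤ 2 * M * e * R := by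
        have hb := abs_setIntegral_le (f := φ)
          (g := fun z => 2 * M * e * bk (a₁ * ε) (a₂ * ε) (z - y))
          (S := Set.Iic L \ Set.Icc (y - δ₀) (y + δ₀))
          (measurableSet_Iic.diff measurableSet_Icc)
          (hφm.mono_measure (Measure.restrict_mono Set.diff_subset le_rfl))
          ((integrable_bk_shift (m := a₁ * ε) (by positivity) y).const_mul (2 * M * e))
          (fun z => mul_nonneg (by positivity) (bk_nonneg (by positivity) _))
          ?_
        · refine hb.trans_eq ?_
          rw [integral_const_mul, hbkint ε hε0]
        · intro z hz
          obtain ⟨hzL, hzI⟩ := hz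
          have hzy : δ₀ ≤ |z - y| := by
            rw [Set.mem_Icc] at hzI
            push_neg at hzI
            rcases le_or_gt (y - δ₀) z with h' | h'
            · have := hzI h'
              rw [abs_of_pos (by linarith)]; linarith
            · rw [abs_of_neg (by linarith)]; linarith
          have htail : gk (a y * ε) (z - y) ≤ e * bk (a₁ * ε) (a₂ * ε) (z - y) :=
            gk_le_bk_tail hm (by nlinarith [(hell y).1]) (by nlinarith [(hell y).2])
              hδ₀0.le hzy
          rw [hφ, abs_mul, abs_of_nonneg (gk_nonneg hcy _)]
          have hh2 : |h (u + ε) z - h u y| ≤ 2 * M := by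
            calc |h (u + ε) z - h u y| ≤ |h (u + ε) z| + |h u y| := abs_sub _ _
              _ ≤ M + M := add_le_add (hbd _ _) (hbd _ _)
              _ = 2 * M := by ring
          calc |h (u + ε) z - h u y| * gk (a y * ε) (z - y)
              ≤ (2 * M) * (e * bk (a₁ * ε) (a₂ * ε) (z - y)) :=
                mul_le_mul hh2 htail (gk_nonneg hcy _) (by positivity)
            _ = 2 * M * e * bk (a₁ * ε) (a₂ * ε) (z - y) := by ring
      calc |C ε - h u y * Dq ε|
          = |(∫ z in Set.Iic L ∩ Set.Icc (y - δ₀) (y + δ₀), φ z)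
            + ∫ z in Set.Iic L \ Set.Icc (y - δ₀) (y + δ₀), φ z| := by
            rw [hCD, hsplit]
        _ ≤ |∫ z in Set.Iic L ∩ Set.Icc (y - δ₀) (y + δ₀), φ z|
            + |∫ z in Set.Iic L \ Set.Icc (y - δ₀) (y + δ₀), φ z| := abs_add_le _ _
        _ ≤ θ' * R + 2 * M * e * R := add_le_add hb1 hb2
    have hsmall : ∀ᶠ ε in l, 2 * M * Real.exp (-δ₀ ^ 2 / (4 * (a₂ * ε))) * R < θ / 2 := by
      have ht : Tendsto (fun ε : ℝ => 2 * M * Real.exp (-δ₀ ^ 2 / (4 * (a₂ * ε))) * R) l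
          (nhds 0) := by
        simpa using ((hexp0 (δ₀ ^ 2) (by positivity)).const_mul (2 * M)).mul_const R
      exact ht.eventually_lt_const (by positivity)
    filter_upwards [hbound, hsmall] with ε h1 h2
    have hθR : θ' * R ≤ θ / 2 := by
      have e1 : θ' * (R + 1) = θ / 2 := by
        rw [hθ']; field_simp
      nlinarith [hθ'0]
    rw [Real.norm_eq_abs]
    calc |C ε - h u y * Dq ε| ≤ θ' * R + 2 * M * Real.exp (-δ₀ ^ 2 / (4 * (a₂ * ε))) * R := h1
      _ < θ / 2 + θ / 2 := by linarith
      _ = θ := by ring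
  have key : Tendsto
      (fun ε => (A ε - C ε) + (C ε - h u y * Dq ε) + h u y * Dq ε - B ε) l
      (nhds (h u y)) := by
    have := ((c2.add c3).add (c4.const_mul (h u y))).sub c1
    simpa using this
  refine key.congr' ?_
  filter_upwards [eventually_mem_nhdsWithin] with ε (hε : ε ∈ Set.Ioi 0)
  have hε0 : (0:ℝ) < ε := hε
  have : (∫ z in Set.Iic L,
      h (u + ε) z * (gk (a z * ε) (z - y) - gk (a z * ε) (z + y - 2 * L))) = A ε - B ε := by
    rw [hA, hB]
    simp only [mul_sub]
    exact integral_sub (hIA ε hε0) (hIB ε hε0)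
  rw [this]
  ring
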